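/- arXiv:1709.00593 — 2 statements merged into one kernel-verified Lean document; each statement's English description precedes it below -/
import Mathlib

section
/- Let v : ℝ² → ℝ be a harmonic function on all of ℝ² satisfying v(x) ≤ C₁ + C₂ log|x| for all |x| ≥ R₀, for some constants C₁, C₂, R₀ > 0. Then v is constant. -/
open Real Complex Metric Filter

/-- real-linear maps on ℂ are determined by values at 1 and I -/
lemma clm_complex_apply {F : Type*} [NormedAddCommGroup F] [NormedSpace ℝ F]
    (L : ℂ →L[ℝ] F) (w : ℂ) : L w = w.re • L 1 + w.im • L Complex.I := by
  conv_lhs => rw [← Complex.re_add_im w]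
  have h1 : (w.re : ℂ) = w.re • (1:ℂ) := by simp
  have h2 : (w.im : ℂ) * Complex.I = w.im • Complex.I := by
    simp [Complex.real_smul]
  rw [h1, h2, map_add, map_smul, map_smul]

/-- every entire function has a primitive -/
lemma exists_primitive (f : ℂ → ℂ) (hf : Differentiable ℂ f) :
    ∃ F : ℂ → ℂ, ∀ z, HasDerivAt F (f z) z := by
  set a : ℕ → ℂ := fun n => (n.factorial : ℂ)⁻¹ * iteratedDeriv n f 0 with ha
  have hsum : ∀ z : ℂ, HasSum (fun n => a n * z ^ n) (f z) := by
    intro z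
    have := Complex.hasSum_taylorSeries_of_entire hf 0 z
    convert this using 2 with n
    · rfl
    simp [ha, smul_eq_mul]
    ring
  have hs_norm : ∀ r : ℝ, 0 ≤ r → Summable (fun n => ‖a n‖ * r ^ n) := by
    intro r hr
    set s : ℝ := 2 * r + 1 with hs
    have hs0 : 0 < s := by positivity
    have h1 : Summable (fun n => a n * (s:ℂ) ^ n) := (hsum s).summable
    have h2 : Tendsto (fun n => ‖a n * (s:ℂ) ^ n‖) atTop (nhds 0) := by
      simpa using h1.tendsto_atTop_zero.norm
    obtain ⟨M, hM⟩ := h2.bddAbove_range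
    have hMn : ∀ n, ‖a n‖ * s ^ n ≤ M := by
      intro n
      have := hM (Set.mem_range_self n)
      simpa [norm_mul, norm_pow, Complex.norm_real, _root_.abs_of_nonneg hs0.le] using this
    have hgs : Summable (fun n : ℕ => M * (1/2) ^ n) :=
      (summable_geometric_of_lt_one (by norm_num) (by norm_num)).mul_left M
    refine Summable.of_nonneg_of_le
      (fun n => mul_nonneg (norm_nonneg _) (pow_nonneg hr n)) (fun n => ?_) hgs
    · have hle : r ^ n ≤ s ^ n * (1/2) ^ n := by
        rw [← mul_pow]
        apply pow_le_pow_left₀ hr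
        rw [hs]; linarith
      calc ‖a n‖ * r ^ n ≤ ‖a n‖ * (s ^ n * (1/2)^n) := by
            apply mul_le_mul_of_nonneg_left hle (norm_nonneg _)
        _ = (‖a n‖ * s ^ n) * (1/2)^n := by ring
        _ ≤ M * (1/2)^n := by
            apply mul_le_mul_of_nonneg_right (hMn n) (by positivity)
  set b : ℕ → ℂ := fun n => if n = 0 then 0 else a (n-1) / n with hb
  refine ⟨fun z => ∑' n, b n * z ^ n, fun y => ?_⟩
  set ρ : ℝ := ‖y‖ + 1 with hρ
  have hρ0 : 0 < ρ := by positivity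
  set u : ℕ → ℝ := fun n => ‖b n‖ * (n * ρ ^ (n-1)) with hu
  have hsu : Summable u := by
    rw [← summable_nat_add_iff 1]
    have : (fun n => u (n + 1)) = fun n => ‖a n‖ * ρ ^ n := by
      funext n
      have hn1 : ((n:ℝ) + 1) ≠ 0 := by positivity
      have habs : ‖((n:ℂ)+1)‖ = (n:ℝ)+1 := by
        rw [show ((n:ℂ)+1) = ((n+1:ℕ):ℂ) by push_cast; ring, Complex.norm_natCast]
        push_cast; ring
      have hbn : ‖b (n+1)‖ = ‖a n‖ / ((n:ℝ)+1) := by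
        simp [hb, norm_div, habs]
      show ‖b (n+1)‖ * (((n+1:ℕ):ℝ) * ρ ^ ((n+1)-1)) = ‖a n‖ * ρ ^ n
      rw [Nat.add_sub_cancel, hbn]
      push_cast
      field_simp
    rw [this]
    exact hs_norm ρ hρ0.le
  have hder : ∀ n (z : ℂ), HasDerivAt (fun w => b n * w ^ n)
      (b n * (n * z ^ (n-1))) z := fun n z => (hasDerivAt_pow n z).const_mul (b n)
  have hbound : ∀ n (z : ℂ), z ∈ ball (0:ℂ) ρ → ‖b n * ((n:ℂ) * z ^ (n-1))‖ ≤ u n := by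
    intro n z hz
    rw [mem_ball_zero_iff] at hz
    have : ‖b n * ((n:ℂ) * z ^ (n-1))‖ = ‖b n‖ * (n * ‖z‖ ^ (n-1)) := by
      simp [norm_mul, norm_pow]
    rw [this]
    show ‖b n‖ * ((n:ℝ) * ‖z‖ ^ (n-1)) ≤ ‖b n‖ * ((n:ℝ) * ρ ^ (n-1))
    apply mul_le_mul_of_nonneg_left _ (norm_nonneg _)
    apply mul_le_mul_of_nonneg_left _ (Nat.cast_nonneg n)
    exact pow_le_pow_left₀ (norm_nonneg z) hz.le _
  have hg0 : Summable (fun n => b n * (0:ℂ) ^ n) := by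
    apply summable_of_ne_finset_zero (s := {0})
    intro n hn
    simp only [Finset.mem_singleton] at hn
    simp [zero_pow hn]
  have := hasDerivAt_tsum_of_isPreconnected (y₀ := (0:ℂ)) (y := y)
    (g := fun n w => b n * w ^ n) (g' := fun n z => b n * ((n:ℂ) * z ^ (n-1)))
    hsu isOpen_ball
    (convex_ball (0:ℂ) ρ).isPreconnected (fun n z _ => hder n z) hbound
    (by simpa [mem_ball_zero_iff] using hρ0) hg0
    (by simp [mem_ball_zero_iff, hρ])
  convert this using 1
  · rfl
  · rfl
  have hSum : Summable fun n => b n * ((n:ℂ) * y ^ (n-1)) := by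
    apply Summable.of_norm_bounded hsu
    intro n
    exact hbound n y (by simp [mem_ball_zero_iff, hρ])
  rw [hSum.tsum_eq_zero_add]
  have h0 : b 0 * ((((0:ℕ)):ℂ) * y ^ (0-1)) = 0 := by simp
  rw [h0, zero_add]
  rw [show (fun n => b (n+1) * ((((n:ℕ)+1 : ℕ):ℂ) * y ^ ((n+1)-1))) = fun n => a n * y ^ n by
    funext n; push_cast
    have hn1 : ((n:ℂ) + 1) ≠ 0 := Nat.cast_add_one_ne_zero n
    simp only [hb, Nat.add_eq_zero, and_false, if_false, Nat.add_sub_cancel]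
    push_cast
    field_simp
    simp only [and_false, if_false]
    rw [mul_div_assoc', mul_div_cancel_left₀ _ hn1]]
  exact ((hsum y).tsum_eq).symm

/-- Liouville for sublinear growth -/
lemma const_of_sublinear (h : ℂ → ℂ) (hd : Differentiable ℂ h) (K α ρ : ℝ)
    (hα0 : 0 ≤ α) (hα1 : α < 1) (hK : 0 ≤ K) (hρ : 0 < ρ)
    (hbd : ∀ z : ℂ, ρ ≤ ‖z‖ → ‖h z‖ ≤ K * ‖z‖ ^ α) :
    ∀ z, h z = h 0 := by
  have hderiv : ∀ c : ℂ, deriv h c = 0 := by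
    intro c
    have hbound : ∀ᶠ R in atTop, ‖deriv h c‖ ≤ K * (‖c‖ + R) ^ α / R := by
      filter_upwards [eventually_ge_atTop (ρ + ‖c‖ + 1)] with R hR
      have hR0 : 0 < R := by
        have := norm_nonneg c; linarith
      apply Complex.norm_deriv_le_of_forall_mem_sphere_norm_le hR0
        (hd.diffContOnCl)
      intro z hz
      rw [mem_sphere_iff_norm] at hz
      have h3 : ‖z - c‖ ≤ ‖z‖ + ‖c‖ := norm_sub_le z c
      have h1 : ρ ≤ ‖z‖ := by rw [hz] at h3; linarith
      have h2 : ‖z‖ ≤ ‖c‖ + R := by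
        calc ‖z‖ = ‖c + (z - c)‖ := by rw [add_sub_cancel]
          _ ≤ ‖c‖ + ‖z - c‖ := norm_add_le _ _
          _ = ‖c‖ + R := by rw [hz]
      calc ‖h z‖ ≤ K * ‖z‖ ^ α := hbd z h1
        _ ≤ K * (‖c‖ + R) ^ α := by
            gcongr
    have hlim : Tendsto (fun R : ℝ => K * (‖c‖ + R) ^ α / R) atTop (nhds 0) := by
      apply squeeze_zero' (g := fun R => (K * 2^α) * R ^ (α - 1))
      · filter_upwards [eventually_ge_atTop (max 1 ‖c‖)] with R hR
        have hR0 : (0:ℝ) < R := lt_of_lt_of_le one_pos (le_trans (le_max_left _ _) hR)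
        positivity
      · filter_upwards [eventually_ge_atTop (max 1 ‖c‖)] with R hR
        have hR1 : (1:ℝ) ≤ R := le_trans (le_max_left _ _) hR
        have hRc : ‖c‖ ≤ R := le_trans (le_max_right _ _) hR
        have hR0 : (0:ℝ) < R := lt_of_lt_of_le one_pos hR1
        have h1 : (‖c‖ + R) ^ α ≤ (2*R) ^ α := by
          apply Real.rpow_le_rpow (by positivity) (by linarith) hα0
        calc K * (‖c‖ + R) ^ α / R ≤ K * (2*R)^α / R := by gcongr
          _ = (K * 2^α) * R ^ (α - 1) := by
              rw [Real.mul_rpow (by norm_num) hR0.le, Real.rpow_sub hR0,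
                Real.rpow_one]
              ring
      · have h2 := (tendsto_rpow_neg_atTop (show (0:ℝ) < 1 - α by linarith)).const_mul
          (K * 2^α)
        simpa [neg_sub] using h2
    have : ‖deriv h c‖ ≤ 0 := ge_of_tendsto hlim hbound
    simpa using le_antisymm this (norm_nonneg _)
  intro z
  exact is_const_of_deriv_eq_zero hd hderiv z 0

open Real

/-- Liouville-type theorem: a harmonic function on ℝ² with at most logarithmic
growth from above is constant. -/
theorem harmonic_log_growth_const (v : EuclideanSpace ℝ (Fin 2) → ℝ)
    (hv : ContDiff ℝ 2 v)
    (hharm : ∀ x, ∑ i : Fin 2,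
      iteratedFDeriv ℝ 2 v x ![EuclideanSpace.single i 1, EuclideanSpace.single i 1] = 0)
    (C₁ C₂ R₀ : ℝ) (hC₁ : 0 < C₁) (hC₂ : 0 < C₂) (hR₀ : 0 < R₀)
    (hgrowth : ∀ x : EuclideanSpace ℝ (Fin 2), R₀ ≤ ‖x‖ → v x ≤ C₁ + C₂ * Real.log ‖x‖) :
    ∃ c : ℝ, ∀ x, v x = c := by
  classical
  set e₀ : EuclideanSpace ℝ (Fin 2) := EuclideanSpace.single 0 1 with he₀
  set e₁ : EuclideanSpace ℝ (Fin 2) := EuclideanSpace.single 1 1 with he₁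
  set T : ℂ →L[ℝ] EuclideanSpace ℝ (Fin 2) :=
    Complex.reCLM.smulRight e₀ + Complex.imCLM.smulRight e₁ with hT
  have hTapp : ∀ z : ℂ, T z = z.re • e₀ + z.im • e₁ := fun z => rfl
  have hT1 : T 1 = e₀ := by rw [hTapp]; simp
  have hTI : T Complex.I = e₁ := by rw [hTapp]; simp
  have hTcoord0 : ∀ z : ℂ, (T z) 0 = z.re := by
    intro z
    rw [hTapp]
    simp [he₀, he₁, PiLp.add_apply, PiLp.smul_apply, EuclideanSpace.single_apply]
  have hTcoord1 : ∀ z : ℂ, (T z) 1 = z.im := by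
    intro z
    rw [hTapp]
    simp [he₀, he₁, PiLp.add_apply, PiLp.smul_apply, EuclideanSpace.single_apply]
  have hTnorm : ∀ z : ℂ, ‖T z‖ = ‖z‖ := by
    intro z
    rw [EuclideanSpace.norm_eq, Fin.sum_univ_two, hTcoord0, hTcoord1,
      Complex.norm_def, Complex.normSq_apply]
    simp only [Real.norm_eq_abs]
    congr 1
    rw [_root_.sq_abs, _root_.sq_abs]
    ring
  have hTsurj : ∀ x : EuclideanSpace ℝ (Fin 2), T (⟨x 0, x 1⟩ : ℂ) = x := by
    intro x
    ext i
    fin_cases i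
    · exact hTcoord0 _
    · exact hTcoord1 _
  have hvd : Differentiable ℝ v := hv.differentiable (by norm_num)
  have hg1 : ContDiff ℝ 1 (fderiv ℝ v) := hv.fderiv_right (by norm_num)
  have hgd : Differentiable ℝ (fderiv ℝ v) := hg1.differentiable (by norm_num)
  set g := fderiv ℝ v with hg
  set D := fun x => fderiv ℝ g x with hD
  have hsymm : ∀ x a b', D x a b' = D x b' a := fun x a b' =>
    second_derivative_symmetric (fun y => (hvd y).hasFDerivAt) (hgd x).hasFDerivAt a b'
  have hlap : ∀ x, D x e₀ e₀ + D x e₁ e₁ = 0 := by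
    intro x
    have h := hharm x
    rw [Fin.sum_univ_two, iteratedFDeriv_two_apply, iteratedFDeriv_two_apply] at h
    simpa [Matrix.cons_val_zero, Matrix.cons_val_one, Matrix.head_cons, he₀, he₁,
      hD, hg] using h
  set φ : (EuclideanSpace ℝ (Fin 2) →L[ℝ] ℝ) →L[ℝ] ℂ :=
    Complex.ofRealCLM.comp (ContinuousLinearMap.apply ℝ ℝ e₀)
      - Complex.I • Complex.ofRealCLM.comp (ContinuousLinearMap.apply ℝ ℝ e₁) with hφ
  have hφapp : ∀ L : EuclideanSpace ℝ (Fin 2) →L[ℝ] ℝ,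
      φ L = (L e₀ : ℂ) - Complex.I * (L e₁ : ℂ) := by
    intro L
    rw [hφ]
    simp [ContinuousLinearMap.sub_apply, ContinuousLinearMap.smul_apply,
      ContinuousLinearMap.comp_apply, ContinuousLinearMap.apply_apply, smul_eq_mul]
  set f : ℂ → ℂ := fun z => φ (g (T z)) with hf
  have hfder : ∀ z : ℂ, HasFDerivAt f (φ.comp ((D (T z)).comp (T : ℂ →L[ℝ] _))) z := by
    intro z
    exact (φ.hasFDerivAt).comp z (((hgd (T z)).hasFDerivAt).comp z (T.hasFDerivAt))
  have hCR : ∀ z : ℂ, (φ.comp ((D (T z)).comp (T : ℂ →L[ℝ] _))) Complex.I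
      = Complex.I * (φ.comp ((D (T z)).comp (T : ℂ →L[ℝ] _))) 1 := by
    intro z
    have h1 := hsymm (T z) e₀ e₁
    have h2 := hlap (T z)
    simp only [ContinuousLinearMap.comp_apply, hT1, hTI, hφapp, ContinuousLinearMap.coe_coe]
    rw [Complex.ext_iff]
    constructor
    · simp
      linarith
    · simp
      linarith
  have hfdiff : Differentiable ℂ f := by
    intro z
    refine HasFDerivAt.differentiableAt (𝕜 := ℂ)
      (f' := ContinuousLinearMap.smulRight (1 : ℂ →L[ℂ] ℂ)
        ((φ.comp ((D (T z)).comp (T : ℂ →L[ℝ] _))) 1)) ?_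
    refine hasFDerivAt_of_restrictScalars (𝕜 := ℝ) (hfder z) ?_
    apply ContinuousLinearMap.ext
    intro w
    have hdec := clm_complex_apply (φ.comp ((D (T z)).comp (T : ℂ →L[ℝ] _))) w
    rw [hdec, hCR z]
    show w • ((φ.comp ((D (T z)).comp (T : ℂ →L[ℝ] _))) 1) = _
    rw [smul_eq_mul, Complex.real_smul, Complex.real_smul]
    conv_lhs => rw [← Complex.re_add_im w]
    ring
  obtain ⟨F, hF⟩ := exists_primitive f hfdiff
  have hFd : Differentiable ℂ F := fun z => (hF z).differentiableAt
  have hW : ∀ z : ℂ, v (T z) - (F z).re = v (T 0) - (F 0).re := by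
    have hWd : ∀ z : ℂ, HasFDerivAt (fun z : ℂ => v (T z) - (F z).re)
        (0 : ℂ →L[ℝ] ℝ) z := by
      intro z
      have h1 : HasFDerivAt (fun z : ℂ => v (T z)) ((g (T z)).comp (T : ℂ →L[ℝ] _)) z :=
        ((hvd (T z)).hasFDerivAt).comp z T.hasFDerivAt
      have h2 : HasFDerivAt (fun z : ℂ => (F z).re)
          (Complex.reCLM.comp ((ContinuousLinearMap.smulRight (1 : ℂ →L[ℂ] ℂ)
            (f z)).restrictScalars ℝ)) z :=
        (Complex.reCLM.hasFDerivAt).comp z ((hF z).hasFDerivAt.restrictScalars ℝ)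
      have h3 := h1.sub h2
      refine h3.congr_fderiv ?_
      apply ContinuousLinearMap.ext
      intro w
      simp only [ContinuousLinearMap.sub_apply, ContinuousLinearMap.zero_apply,
        ContinuousLinearMap.comp_apply, ContinuousLinearMap.coe_restrictScalars',
        ContinuousLinearMap.smulRight_apply, ContinuousLinearMap.one_apply,
        Complex.reCLM_apply, smul_eq_mul]
      rw [sub_eq_zero]
      have hdec := clm_complex_apply ((g (T z)).comp (T : ℂ →L[ℝ] _)) w
      simp only [ContinuousLinearMap.comp_apply, hT1, hTI,
        ContinuousLinearMap.coe_coe] at hdec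
      rw [hdec, hf]
      simp only [hφapp]
      rw [Complex.mul_re]
      simp only [Complex.sub_re, Complex.sub_im, Complex.ofReal_re, Complex.ofReal_im,
        Complex.mul_re, Complex.mul_im, Complex.I_re, Complex.I_im, smul_eq_mul]
      ring
    intro z
    exact is_const_of_fderiv_eq_zero (𝕜 := ℝ)
      (fun z => (hWd z).differentiableAt) (fun z => (hWd z).fderiv) z 0
  set c₀ : ℝ := v (T 0) - (F 0).re with hc₀
  have hFre : ∀ z : ℂ, max R₀ 1 ≤ ‖z‖ → (F z).re ≤ (C₁ - c₀) + C₂ * Real.log ‖z‖ := by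
    intro z hz
    have h1 : R₀ ≤ ‖T z‖ := by rw [hTnorm]; exact le_trans (le_max_left _ _) hz
    have h2 := hgrowth (T z) h1
    rw [hTnorm] at h2
    have h3 := hW z
    have h4 : c₀ = v (T 0) - (F 0).re := hc₀
    linarith
  set m : ℕ := ⌈C₂⌉₊ + 1 with hm
  have hmpos : (0:ℝ) < m := by positivity
  have hC₂m : C₂ < (m:ℝ) := by
    calc C₂ ≤ (⌈C₂⌉₊ : ℝ) := Nat.le_ceil C₂
      _ < (m:ℝ) := by rw [hm]; exact_mod_cast Nat.lt_succ_self _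
  set hfun : ℂ → ℂ := fun z => Complex.exp ((m:ℝ)⁻¹ • F z) with hh
  have hhd : Differentiable ℂ hfun := (hFd.const_smul ((m:ℝ)⁻¹)).cexp
  have hhnorm : ∀ z, ‖hfun z‖ = Real.exp ((m:ℝ)⁻¹ * (F z).re) := by
    intro z
    rw [hh]
    simp only [Complex.norm_exp]
    congr 1
    rw [Complex.real_smul, Complex.mul_re]
    simp
  set K := Real.exp ((m:ℝ)⁻¹ * (C₁ - c₀)) with hK
  set α := C₂ / (m:ℝ) with hα
  have hα0 : 0 ≤ α := le_of_lt (div_pos hC₂ hmpos)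
  have hα1 : α < 1 := (div_lt_one hmpos).2 hC₂m
  have hbd : ∀ z : ℂ, max R₀ 1 ≤ ‖z‖ → ‖hfun z‖ ≤ K * ‖z‖ ^ α := by
    intro z hz
    have hz1 : (1:ℝ) ≤ ‖z‖ := le_trans (le_max_right _ _) hz
    have hz0 : (0:ℝ) < ‖z‖ := lt_of_lt_of_le one_pos hz1
    rw [hhnorm]
    have h1 : (F z).re ≤ (C₁ - c₀) + C₂ * Real.log ‖z‖ := hFre z hz
    have h2 : (m:ℝ)⁻¹ * (F z).re ≤ (m:ℝ)⁻¹ * (C₁ - c₀) + α * Real.log ‖z‖ := by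
      have := mul_le_mul_of_nonneg_left h1 (le_of_lt (inv_pos.2 hmpos))
      have heq : (m:ℝ)⁻¹ * ((C₁ - c₀) + C₂ * Real.log ‖z‖)
          = (m:ℝ)⁻¹ * (C₁ - c₀) + α * Real.log ‖z‖ := by
        rw [hα]; field_simp; try ring
      linarith
    calc Real.exp ((m:ℝ)⁻¹ * (F z).re)
        ≤ Real.exp ((m:ℝ)⁻¹ * (C₁ - c₀) + α * Real.log ‖z‖) := Real.exp_le_exp.2 h2
      _ = K * ‖z‖ ^ α := by
          rw [Real.exp_add, hK, Real.rpow_def_of_pos hz0, mul_comm (Real.log ‖z‖) α]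
  have hconst := const_of_sublinear hfun hhd K α (max R₀ 1) hα0 hα1
    (le_of_lt (Real.exp_pos _)) (lt_of_lt_of_le hR₀ (le_max_left _ _)) hbd
  have hFre_const : ∀ z, (F z).re = (F 0).re := by
    intro z
    have h1 : ‖hfun z‖ = ‖hfun 0‖ := by rw [hconst z]
    rw [hhnorm, hhnorm] at h1
    have h2 := Real.exp_eq_exp.1 h1
    exact mul_left_cancel₀ (inv_ne_zero (ne_of_gt hmpos)) h2
  refine ⟨v (T 0), fun x => ?_⟩
  have hx := hTsurj x
  have h1 := hW (⟨x 0, x 1⟩ : ℂ)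
  rw [hFre_const, hx] at h1
  linarith
end

section
/- Fix q > 4 and suppose there exist constants ε(q) > 0 and C(q) > 0 with the following property: for every pair (u, ψ) with ψ ∈ L⁴(B₁) a weak solution of Dψ = −e^u ψ in B₁ and ∫_{B₁} e^{2u} ≤ ε(q), one has ‖ψ‖_{L^q(B_{1/2})} ≤ C(q)‖ψ‖_{L⁴(B₁)}. Further assume the equation and the hypotheses are invariant under the scaling u_r(x) = u(rx) + log r, ψ_r(x) = r^{1/2} ψ(rx), with ∫_{B₁} e^{2u_r} = ∫_{B_r} e^{2u} and ‖ψ_r‖_{L^q(B_{1/2})} = r^{(q−4)/(2q)} ‖ψ‖_{L^q(B_{r/2})}. Then for any (u, ψ) defined on all of ℝ² with ∫_{ℝ²} e^{2u} ≤ ε(q)/2 and ψ ∈ L⁴(ℝ²) solving Dψ = −e^u ψ weakly on ℝ², one has ψ ≡ 0. -/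
open MeasureTheory Real Metric
open scoped ENNReal NNReal

/-- Spinors on ℝ² (a rank-2 complex vector bundle over ℝ², trivialized). -/
abbrev Spin2 := EuclideanSpace ℂ (Fin 2)

abbrev E2 := EuclideanSpace ℝ (Fin 2)

/-- The conformally scaled spinor is in L⁴ of the unit ball, with L⁴ norm bounded by
the global L⁴ norm of the original spinor. -/
lemma scaled_mem_and_bound (ψ : E2 → Spin2) (hL4 : MemLp ψ 4 (volume : Measure E2))
    (r : ℝ) (hr : 0 < r) :
    MemLp (fun x => (Real.sqrt r : ℂ) • ψ (r • x)) 4 (volume.restrict (ball (0:E2) 1)) ∧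
      eLpNorm (fun x => (Real.sqrt r : ℂ) • ψ (r • x)) 4 (volume.restrict (ball (0:E2) 1)) ≤
        eLpNorm ψ 4 (volume : Measure E2) := by
  have hfin : Module.finrank ℝ E2 = 2 := finrank_euclideanSpace_fin
  have hmap : Measure.map (fun x : E2 => r • x) volume =
      ENNReal.ofReal |((r:ℝ) ^ 2)⁻¹| • volume := by
    have := Measure.map_addHaar_smul (volume : Measure E2) (r := r) hr.ne'
    rwa [hfin] at this
  have hmeas : Measurable (fun x : E2 => r • x) := (continuous_const_smul r).measurable
  have hc0 : ENNReal.ofReal |((r:ℝ)^2)⁻¹| ≠ 0 := by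
    simp only [ne_eq, ENNReal.ofReal_eq_zero, not_le]
    positivity
  have hψmap : AEStronglyMeasurable ψ (Measure.map (fun x : E2 => r • x) volume) := by
    rw [hmap]; exact hL4.1.mono_ac Measure.smul_absolutelyContinuous
  have hmemmap : MemLp ψ 4 (Measure.map (fun x : E2 => r • x) volume) := by
    rw [hmap]; exact hL4.smul_measure ENNReal.ofReal_ne_top
  have hcomp : MemLp (ψ ∘ (fun x : E2 => r • x)) 4 (volume : Measure E2) :=
    hmemmap.comp_of_map hmeas.aemeasurable
  have heq : (fun x : E2 => (Real.sqrt r : ℂ) • ψ (r • x)) =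
      (Real.sqrt r : ℂ) • (ψ ∘ fun x : E2 => r • x) := rfl
  have hs : 0 < Real.sqrt r := Real.sqrt_pos.2 hr
  -- the crucial real arithmetic identity
  have key : Real.sqrt r * (((r:ℝ)^2)⁻¹) ^ ((1:ℝ)/4) = 1 := by
    have h1 : ((r:ℝ)^2)⁻¹ = Real.sqrt r ^ ((-4 : ℝ)) := by
      rw [Real.rpow_neg hs.le, show ((4:ℝ)) = ((4:ℕ):ℝ) by norm_num, Real.rpow_natCast]
      rw [show (4:ℕ) = 2*2 from rfl, pow_mul, Real.sq_sqrt hr.le]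
    have h2 : (((r:ℝ)^2)⁻¹) ^ ((1:ℝ)/4) = (Real.sqrt r)⁻¹ := by
      rw [h1, ← Real.rpow_mul hs.le]
      norm_num [Real.rpow_neg_one]
    rw [h2]
    exact mul_inv_cancel₀ hs.ne'
  refine ⟨by rw [heq]; exact (hcomp.const_smul _).restrict _, ?_⟩
  have ht : (1/(4:ℝ≥0∞)).toReal = (1:ℝ)/4 := by simp
  calc eLpNorm (fun x : E2 => (Real.sqrt r : ℂ) • ψ (r • x)) 4 (volume.restrict (ball (0:E2) 1))
      ≤ eLpNorm (fun x : E2 => (Real.sqrt r : ℂ) • ψ (r • x)) 4 volume :=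
        eLpNorm_mono_measure _ Measure.restrict_le_self
    _ = (‖(Real.sqrt r : ℂ)‖₊ : ℝ≥0∞) * eLpNorm (ψ ∘ fun x : E2 => r • x) 4 volume := by
        rw [heq]; exact eLpNorm_const_smul _ _ _ _
    _ = (‖(Real.sqrt r : ℂ)‖₊ : ℝ≥0∞) *
          eLpNorm ψ 4 (Measure.map (fun x : E2 => r • x) volume) := by
        rw [eLpNorm_map_measure hψmap hmeas.aemeasurable]
    _ = (‖(Real.sqrt r : ℂ)‖₊ : ℝ≥0∞) *
          (ENNReal.ofReal |((r:ℝ)^2)⁻¹| ^ (1/(4:ℝ≥0∞)).toReal * eLpNorm ψ 4 volume) := by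
        rw [hmap, eLpNorm_smul_measure_of_ne_zero hc0, smul_eq_mul]
    _ = eLpNorm ψ 4 (volume : Measure E2) := by
        rw [← mul_assoc]
        have habs : |((r:ℝ)^2)⁻¹| = ((r:ℝ)^2)⁻¹ := abs_of_pos (by positivity)
        have hnn : (‖(Real.sqrt r : ℂ)‖₊ : ℝ≥0∞) = ENNReal.ofReal (Real.sqrt r) := by
          rw [← enorm_eq_nnnorm, ← ofReal_norm, Complex.norm_real,
            Real.norm_of_nonneg (Real.sqrt_nonneg r)]
        rw [ht, habs, hnn, ENNReal.ofReal_rpow_of_pos (by positivity),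
          ← ENNReal.ofReal_mul (Real.sqrt_nonneg r), key, ENNReal.ofReal_one, one_mul]

/-- Energy gap for the Dirac equation Dψ = −e^u ψ on ℝ²: given the ε-regularity
estimate on the unit disk and the conformal scaling invariance of the equation
(with the associated scaling identities for the energy and the L^q norms),
any solution on all of ℝ² with small energy ∫ e^{2u} ≤ ε(q)/2 and ψ ∈ L⁴(ℝ²)
vanishes identically. -/
theorem dirac_energy_gap (q : ℝ) (hq : 4 < q) (ε C : ℝ) (hε : 0 < ε) (hC : 0 < C)
    (WeakSolOn : (E2 → ℝ) → (E2 → Spin2) → Set E2 → Prop)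
    -- ε-regularity: the local L^q estimate on the unit disk
    (h_local : ∀ (u : E2 → ℝ) (ψ : E2 → Spin2),
      WeakSolOn u ψ (ball 0 1) →
      MemLp ψ 4 (volume.restrict (ball (0:E2) 1)) →
      (∫ x in ball (0:E2) 1, Real.exp (2 * u x)) ≤ ε →
      eLpNorm ψ (ENNReal.ofReal q) (volume.restrict (ball (0:E2) (1/2))) ≤
        ENNReal.ofReal C * eLpNorm ψ 4 (volume.restrict (ball (0:E2) 1)))
    -- conformal scaling invariance of the equation
    (h_scale : ∀ (u : E2 → ℝ) (ψ : E2 → Spin2) (r : ℝ), 0 < r →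
      WeakSolOn u ψ Set.univ →
      WeakSolOn (fun x => u (r • x) + Real.log r)
        (fun x => (Real.sqrt r : ℂ) • ψ (r • x)) (ball 0 1))
    -- scaling identity for the energy
    (h_int_scale : ∀ (u : E2 → ℝ) (r : ℝ), 0 < r →
      (∫ x in ball (0:E2) 1, Real.exp (2 * (u (r • x) + Real.log r))) =
        ∫ x in ball (0:E2) r, Real.exp (2 * u x))
    -- scaling identity for the L^q norm
    (h_norm_scale : ∀ (ψ : E2 → Spin2) (r : ℝ), 0 < r →
      eLpNorm (fun x => (Real.sqrt r : ℂ) • ψ (r • x)) (ENNReal.ofReal q)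
          (volume.restrict (ball (0:E2) (1/2))) =
        ENNReal.ofReal (r ^ ((q - 4) / (2 * q))) *
          eLpNorm ψ (ENNReal.ofReal q) (volume.restrict (ball (0:E2) (r/2))))
    (u : E2 → ℝ) (ψ : E2 → Spin2)
    (hsol : WeakSolOn u ψ Set.univ)
    (henergy : (∫ x : E2, Real.exp (2 * u x)) ≤ ε / 2)
    (henergy' : Integrable (fun x : E2 => Real.exp (2 * u x)))
    (hL4 : MemLp ψ 4 (volume : Measure E2)) :
    ψ =ᵐ[(volume : Measure E2)] 0 := by
  have hq0 : (0:ℝ) < q := by linarith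
  have hq'0 : (ENNReal.ofReal q) ≠ 0 := by
    simp only [ne_eq, ENNReal.ofReal_eq_zero, not_le]; linarith
  have hα : 0 < (q - 4) / (2 * q) := by
    apply div_pos <;> linarith
  set M : ℝ≥0∞ := ENNReal.ofReal C * eLpNorm ψ 4 (volume : Measure E2) with hM
  have hM_ne_top : M ≠ ∞ := ENNReal.mul_ne_top ENNReal.ofReal_ne_top hL4.2.ne
  -- the key scaled estimate
  have key : ∀ r : ℝ, 0 < r →
      ENNReal.ofReal (r ^ ((q - 4) / (2 * q))) *
        eLpNorm ψ (ENNReal.ofReal q) (volume.restrict (ball (0:E2) (r/2))) ≤ M := by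
    intro r hr
    obtain ⟨hmem, hbound⟩ := scaled_mem_and_bound ψ hL4 r hr
    have hsol' := h_scale u ψ r hr hsol
    have hen : (∫ x in ball (0:E2) 1, Real.exp (2 * (u (r • x) + Real.log r))) ≤ ε := by
      rw [h_int_scale u r hr]
      have h1 : (∫ x in ball (0:E2) r, Real.exp (2 * u x)) ≤ ∫ x, Real.exp (2 * u x) :=
        setIntegral_le_integral henergy'
          (Filter.Eventually.of_forall fun x => (Real.exp_pos _).le)
      linarith
    have hloc := h_local _ _ hsol' hmem hen
    rw [h_norm_scale ψ r hr] at hloc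
    exact hloc.trans (mul_le_mul_right hbound _)
  -- the L^q norm of ψ on each ball vanishes
  have ball_zero : ∀ n : ℕ,
      eLpNorm ψ (ENNReal.ofReal q) (volume.restrict (ball (0:E2) n)) = 0 := by
    intro n
    set N := eLpNorm ψ (ENNReal.ofReal q) (volume.restrict (ball (0:E2) n)) with hNdef
    have hle : ∀ r : ℝ, max 1 (2 * (n:ℝ)) ≤ r →
        ENNReal.ofReal (r ^ ((q-4)/(2*q))) * N ≤ M := by
      intro r hrr
      have hr0 : (0:ℝ) < r := lt_of_lt_of_le (lt_of_lt_of_le one_pos (le_max_left _ _)) hrr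
      have hsub : ball (0:E2) (n:ℝ) ⊆ ball 0 (r/2) := by
        apply ball_subset_ball
        have : 2 * (n:ℝ) ≤ r := le_trans (le_max_right _ _) hrr
        linarith
      have hmono : N ≤ eLpNorm ψ (ENNReal.ofReal q) (volume.restrict (ball (0:E2) (r/2))) :=
        eLpNorm_mono_measure _ (Measure.restrict_mono hsub le_rfl)
      exact (mul_le_mul_right hmono _).trans (key r hr0)
    by_contra hne
    have h1 : (0:ℝ) < max 1 (2*(n:ℝ)) := lt_of_lt_of_le one_pos (le_max_left _ _)
    have hofne : ∀ r : ℝ, 0 < r → ENNReal.ofReal (r ^ ((q-4)/(2*q))) ≠ 0 := by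
      intro r hr
      simp only [ne_eq, ENNReal.ofReal_eq_zero, not_le]
      positivity
    have hNtop : N ≠ ∞ := by
      intro htop
      have h2 := hle _ le_rfl
      rw [htop, ENNReal.mul_top (hofne _ h1)] at h2
      exact hM_ne_top (top_le_iff.mp h2)
    have hdiv : M / N ≠ ∞ := (ENNReal.div_lt_top hM_ne_top hne).ne
    obtain ⟨r, hr1, hr2⟩ : ∃ r : ℝ, max 1 (2*(n:ℝ)) ≤ r ∧
        (M/N).toReal < r ^ ((q-4)/(2*q)) := by
      have h3 := (tendsto_rpow_atTop hα).eventually_gt_atTop ((M/N).toReal)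
      obtain ⟨r, hr⟩ := (h3.and (Filter.eventually_ge_atTop (max 1 (2*(n:ℝ))))).exists
      exact ⟨r, hr.2, hr.1⟩
    have hlt : M / N < ENNReal.ofReal (r ^ ((q-4)/(2*q))) :=
      (ENNReal.lt_ofReal_iff_toReal_lt hdiv).2 hr2
    have hle' : ENNReal.ofReal (r ^ ((q-4)/(2*q))) ≤ M / N :=
      (ENNReal.le_div_iff_mul_le (Or.inl hne) (Or.inl hNtop)).2 (hle r hr1)
    exact absurd hle' (not_le.2 hlt)
  -- conclude that ψ vanishes a.e. on each ball, hence everywhere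
  have hae : ∀ n : ℕ, (volume : Measure E2) ({x | ψ x ≠ 0} ∩ ball 0 n) = 0 := by
    intro n
    have h0 := ball_zero n
    have h1 : ψ =ᵐ[volume.restrict (ball (0:E2) n)] 0 :=
      (eLpNorm_eq_zero_iff (hL4.1.restrict) hq'0).1 h0
    have h2 : (volume.restrict (ball (0:E2) (n:ℝ))) {x | ψ x ≠ 0} = 0 := by
      have := ae_iff.1 h1
      simpa using this
    rwa [Measure.restrict_apply' measurableSet_ball] at h2
  have hsub : {x : E2 | ψ x ≠ 0} ⊆ ⋃ n : ℕ, {x : E2 | ψ x ≠ 0} ∩ ball 0 n := by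
    intro x hx
    obtain ⟨n, hn⟩ := exists_nat_gt (dist x 0)
    exact Set.mem_iUnion.2 ⟨n, hx, mem_ball.2 hn⟩
  have hnull : (volume : Measure E2) {x | ψ x ≠ 0} = 0 :=
    measure_mono_null hsub (measure_iUnion_null hae)
  exact ae_iff.2 (by simpa using hnull)
end
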